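/- Let T be a string of length n over a linearly ordered alphabet such that all n rotations of T are pairwise distinct, let R_0 < R_1 < ... < R_{n−1} be the rotations of T in lexicographic order, let L be the string with L[i] equal to the last character of R_i, and let LF be the last-to-first map of L. Then for every 0 ≤ i < n, the rotation obtained from R_i by moving its last character to the front equals R_{LF(i)}. -/

import Mathlib

/-- The list of all `n` rotations of a string `T` of length `n`:
the `i`-th rotation is `T[i..n−1]T[0..i−1]`. -/
def rotations {α : Type*} (T : List α) : List (List α) :=
  (List.range T.length).map fun i => T.drop i ++ T.take i

/-- The matrix `M` of `T`: the multiset of all rotations of `T`,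
sorted lexicographically (row `i` is the rotation `R_i`). -/
def sortedRotations {α : Type*} [LinearOrder α] (T : List α) : List (List α) :=
  Multiset.sort (rotations T : Multiset (List α)) (· ≤ ·)

/-- The Burrows-Wheeler transform of `T`: the last characters of the
lexicographically sorted rotations of `T` (the string `L` with `L[i]` the last
character of `R_i`). -/
def bwt {α : Type*} [LinearOrder α] (T : List α) : List α :=
  (sortedRotations T).filterMap List.getLast?

/-- The last-to-first map of a string `L` of length `n`:
`LF(i) = |{ j : L[j] < L[i] }| + |{ j < i : L[j] = L[i] }|` (0-based positions). -/
def lfMap {α : Type*} [LinearOrder α] (L : List α) (i : Fin L.length) : ℕ :=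
  (Finset.univ.filter fun j : Fin L.length => L.get j < L.get i).card +
  (Finset.univ.filter fun j : Fin L.length => (j : ℕ) < (i : ℕ) ∧ L.get j = L.get i).card

namespace BWTAux

lemma lt_iff_lex {α : Type*} [LinearOrder α] (l l' : List α) :
    l < l' ↔ List.Lex (· < ·) l l' := Iff.rfl

lemma cons_lt_cons_iff' {α : Type*} [LinearOrder α] (a b : α) (s t : List α) :
    a :: s < b :: t ↔ a < b ∨ (a = b ∧ s < t) := by
  rw [lt_iff_lex, lt_iff_lex]
  constructor
  · intro h
    cases h with
    | cons h => exact Or.inr ⟨rfl, h⟩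
    | rel h => exact Or.inl h
  · rintro (h | ⟨rfl, h⟩)
    · exact List.Lex.rel h
    · exact List.Lex.cons h

lemma append_lt_append_iff {α : Type*} [LinearOrder α] :
    ∀ (s t u v : List α), s.length = t.length → s ≠ t → (s ++ u < t ++ v ↔ s < t)
  | [], [], _, _, _, hne => absurd rfl hne
  | [], _ :: _, _, _, hl, _ => by simp at hl
  | _ :: _, [], _, _, hl, _ => by simp at hl
  | a :: s, b :: t, u, v, hl, hne => by
    simp only [List.cons_append, cons_lt_cons_iff']
    rcases lt_trichotomy a b with h | rfl | h
    · simp [h]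
    · have hst : s ≠ t := by rintro rfl; exact hne rfl
      have := append_lt_append_iff s t u v (by simpa using hl) hst
      simp [this]
    · simp [lt_asymm h, h.ne']

lemma countP_eq_card {β : Type*} (S : List β) (p : β → Bool) :
    S.countP p = (Finset.univ.filter fun j : Fin S.length => p (S.get j) = true).card := by
  have h1 : (Finset.univ.filter fun j : Fin S.length => p (S.get j) = true).card
      = ((List.finRange S.length).filter fun j => p (S.get j)).length := by
    rw [Finset.card, Finset.filter_val, Fin.univ_def]
    show Multiset.card
      (Multiset.filter _ (↑(List.finRange S.length) : Multiset (Fin S.length))) = _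
    rw [Multiset.filter_coe, Multiset.coe_card]
    congr 1
    simp
  rw [h1, ← List.countP_eq_length_filter]
  conv_lhs => rw [← List.map_get_finRange S, List.countP_map]
  rfl

lemma card_congr_cast {m n : ℕ} (h : m = n) (p : Fin n → Prop) [DecidablePred p] :
    (Finset.univ.filter p).card
      = (Finset.univ.filter fun j : Fin m => p (Fin.cast h j)).card := by
  subst h; rfl

lemma rotations_eq {α : Type*} (T : List α) :
    rotations T = (List.range T.length).map (T.rotate ·) := by
  unfold rotations
  apply List.map_congr_left
  intro k hk
  rw [List.mem_range] at hk
  rw [List.rotate_eq_drop_append_take hk.le]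

lemma mem_rotations {α : Type*} {T R : List α} :
    R ∈ rotations T ↔ ∃ k, k < T.length ∧ R = T.rotate k := by
  rw [rotations_eq]; simp [eq_comm]

lemma length_of_mem_rotations {α : Type*} {T R : List α} (h : R ∈ rotations T) :
    R.length = T.length := by
  rw [mem_rotations] at h; obtain ⟨k, _, rfl⟩ := h; exact List.length_rotate T k

lemma lastD_eq_getLast {α : Type*} (d : α) (R : List α) (hR : R ≠ []) :
    R.getLastD d = R.getLast hR := by
  rw [List.getLastD_eq_getLast?, List.getLast?_eq_getLast_of_ne_nil hR]
  rfl

lemma filterMap_getLast? {α : Type*} (d : α) :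
    ∀ (S : List (List α)), (∀ R ∈ S, R ≠ []) →
      S.filterMap List.getLast? = S.map (fun R => R.getLastD d)
  | [], _ => rfl
  | R :: S, h => by
    have hR : R ≠ [] := h R (by simp)
    rw [List.filterMap_cons, List.map_cons,
      List.getLast?_eq_getLast_of_ne_nil hR, lastD_eq_getLast d R hR,
      filterMap_getLast? d S (fun R hR => h R (by simp [hR]))]

lemma rotate_cons {α : Type*} (d : α) (R : List α) (hR : R ≠ []) :
    R.rotate (R.length - 1) = R.getLastD d :: R.dropLast := by
  conv_lhs => rw [← List.dropLast_append_getLast hR]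
  have hlen : (R.dropLast ++ [R.getLast hR]).length - 1 = R.dropLast.length := by simp
  rw [List.rotate_eq_drop_append_take (by simp), hlen, List.drop_left, List.take_left,
    lastD_eq_getLast d R hR]
  rfl

end BWTAux

open BWTAux in
theorem lf_moves_last_to_front {α : Type*} [LinearOrder α] (T : List α)
    (hdist : (rotations T).Nodup) (i : Fin (bwt T).length) :
    (sortedRotations T)[lfMap (bwt T) i]? =
      ((sortedRotations T)[(i : ℕ)]?).map (fun R => R.rotate (R.length - 1)) := by
  classical
  set S := sortedRotations T with hS
  have hpermrot : S.Perm (rotations T) := Multiset.coe_eq_coe.mp (Multiset.sort_eq _ _)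
  have hsorted : S.Pairwise (· ≤ ·) := Multiset.pairwise_sort _ _
  have hnodup : S.Nodup := hpermrot.nodup_iff.mpr hdist
  have hstrict : S.Pairwise (· < ·) := (hsorted.sortedLE.sortedLT_of_nodup hnodup).pairwise
  have hT : T ≠ [] := by
    rintro rfl
    have h0 : (bwt ([] : List α)).length = 0 := by
      simp [bwt, sortedRotations, rotations]
    exact Nat.not_lt_zero _ (lt_of_lt_of_le i.isLt h0.le)
  have hnpos : 0 < T.length := List.length_pos_iff.mpr hT
  set d := T.getLast hT with hd
  set g : List α → List α := fun R => R.rotate (R.length - 1) with hg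
  set f : List α → α := fun R => R.getLastD d with hf
  -- members of S
  have hmemS : ∀ R ∈ S, R.length = T.length ∧ R ≠ [] := by
    intro R hR
    have hl := length_of_mem_rotations (hpermrot.subset hR)
    refine ⟨hl, ?_⟩
    rintro rfl
    rw [List.length_nil] at hl
    omega
  -- bwt as a map
  have hbwt : bwt T = S.map f := filterMap_getLast? d S (fun R hR => (hmemS R hR).2)
  have hlenbwt : S.length = (bwt T).length := by rw [hbwt, List.length_map]
  have hiS : (i : ℕ) < S.length := by have := i.isLt; omega
  set x := S.get ⟨(i : ℕ), hiS⟩ with hx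
  have hxmem : x ∈ S := List.get_mem S _
  have hbget : ∀ (m : ℕ) (hm : m < (bwt T).length),
      (bwt T)[m]'hm = f (S[m]'(by omega)) := by
    intro m hm
    simp only [hbwt, List.getElem_map]
  -- g maps rotations to rotations bijectively
  have hg_rot : ∀ k, g (T.rotate k) = T.rotate ((k + (T.length - 1)) % T.length) := by
    intro k
    show (T.rotate k).rotate ((T.rotate k).length - 1) = _
    rw [List.length_rotate, List.rotate_rotate]
    exact (List.rotate_mod _ _).symm
  have hg_inv : ∀ R : List α, R.length = T.length → (g R).rotate 1 = R := by
    intro R hl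
    show (R.rotate (R.length - 1)).rotate 1 = R
    rw [List.rotate_rotate, hl, Nat.sub_add_cancel hnpos, ← hl, List.rotate_length]
  have hgsub : (rotations T).map g ⊆ rotations T := by
    intro R hR
    rw [List.mem_map] at hR
    obtain ⟨R', hR', rfl⟩ := hR
    rw [mem_rotations] at hR' ⊢
    obtain ⟨k, hk, rfl⟩ := hR'
    exact ⟨(k + (T.length - 1)) % T.length, Nat.mod_lt _ hnpos, hg_rot k⟩
  have hnodmap : ((rotations T).map g).Nodup := by
    refine List.Nodup.map_on ?_ hdist
    intro R hR R' hR' h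
    rw [← hg_inv R (length_of_mem_rotations hR), ← hg_inv R' (length_of_mem_rotations hR'), h]
  have hpermg : ((rotations T).map g).Perm (rotations T) :=
    (List.subperm_of_subset hnodmap hgsub).perm_of_length_le (by simp)
  have hpermSg : (S.map g).Perm S := ((hpermrot.map g).trans hpermg).trans hpermrot.symm
  -- cons form of g on nonempty lists
  have hgcons : ∀ R : List α, R ≠ [] → g R = f R :: R.dropLast := fun R hR =>
    rotate_cons d R hR
  -- index characterization in a strictly sorted list
  have hkey : ∀ j : Fin S.length, (S.countP fun R => decide (R < S.get j)) = (j : ℕ) := by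
    intro j
    rw [countP_eq_card]
    have heq : (Finset.univ.filter fun m : Fin S.length => decide (S.get m < S.get j) = true)
        = Finset.Iio j := by
      ext m
      simp only [Finset.mem_filter, Finset.mem_univ, true_and, decide_eq_true_eq,
        Finset.mem_Iio]
      exact hstrict.sortedLT.strictMono_get.lt_iff_lt
    rw [heq, Fin.card_Iio]
  -- the image g x is some row of S
  have hmemgx : g x ∈ S := hpermSg.subset (List.mem_map_of_mem (f := g) hxmem)
  obtain ⟨j, hj⟩ := List.mem_iff_get.mp hmemgx
  -- count transport along the permutation
  have hcount1 : (S.countP fun R => decide (R < g x))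
      = S.countP fun R => decide (g R < g x) := by
    rw [← hpermSg.countP_eq (fun R => decide (R < g x)), List.countP_map]
    rfl
  -- pointwise description
  have hpoint : ∀ m : Fin S.length,
      g (S.get m) < g x ↔ (f (S.get m) < f x ∨ ((m : ℕ) < (i : ℕ) ∧ f (S.get m) = f x)) := by
    intro m
    obtain ⟨hlm, hnm⟩ := hmemS (S.get m) (List.get_mem S _)
    obtain ⟨hlx, hnx⟩ := hmemS x hxmem
    rw [hgcons _ hnm, hgcons _ hnx, cons_lt_cons_iff']
    have hiff : f (S.get m) = f x → (S.get m < x ↔ (S.get m).dropLast < x.dropLast) := by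
      intro hfe
      by_cases hRx : S.get m = x
      · rw [hRx]
        simp [lt_irrefl]
      · have hne : (S.get m).dropLast ≠ x.dropLast := by
          intro hdl
          apply hRx
          conv_lhs => rw [← List.dropLast_append_getLast hnm]
          conv_rhs => rw [← List.dropLast_append_getLast hnx]
          rw [← lastD_eq_getLast d _ hnm, ← lastD_eq_getLast d _ hnx, hdl]
          show x.dropLast ++ [f (S.get m)] = x.dropLast ++ [f x]
          rw [hfe]
        have hlen : (S.get m).dropLast.length = x.dropLast.length := by
          rw [List.length_dropLast, List.length_dropLast, hlm, hlx]
        calc S.get m < x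
            ↔ (S.get m).dropLast ++ [(S.get m).getLast hnm]
                < x.dropLast ++ [x.getLast hnx] := by
              rw [List.dropLast_append_getLast hnm, List.dropLast_append_getLast hnx]
          _ ↔ (S.get m).dropLast < x.dropLast := append_lt_append_iff _ _ _ _ hlen hne
    have hmono : S.get m < x ↔ (m : ℕ) < (i : ℕ) := by
      rw [hx, hstrict.sortedLT.strictMono_get.lt_iff_lt]
      exact Iff.rfl
    constructor
    · rintro (h | ⟨hfe, hdl⟩)
      · exact Or.inl h
      · exact Or.inr ⟨hmono.mp ((hiff hfe).mpr hdl), hfe⟩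
    · rintro (h | ⟨hmi, hfe⟩)
      · exact Or.inl h
      · exact Or.inr ⟨hfe, (hiff hfe).mp (hmono.mpr hmi)⟩
  -- bwt entries
  have hbg : ∀ m : Fin S.length, (bwt T).get (Fin.cast hlenbwt m) = f (S.get m) := by
    intro m
    rw [List.get_eq_getElem]
    exact hbget _ _
  have hbgi : (bwt T).get i = f x := by
    rw [List.get_eq_getElem, hbget _ i.isLt, hx]
    rfl
  -- compute the count as the LF value
  have hcount2 : (S.countP fun R => decide (g R < g x)) = lfMap (bwt T) i := by
    rw [countP_eq_card]
    have hsplit : (Finset.univ.filter fun m : Fin S.length =>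
          decide (g (S.get m) < g x) = true)
        = (Finset.univ.filter fun m : Fin S.length => f (S.get m) < f x)
          ∪ (Finset.univ.filter fun m : Fin S.length =>
              (m : ℕ) < (i : ℕ) ∧ f (S.get m) = f x) := by
      rw [← Finset.filter_or]
      apply Finset.filter_congr
      intro m _
      simpa using hpoint m
    rw [hsplit, Finset.card_union_of_disjoint (by
      rw [Finset.disjoint_left]
      intro m hm hm'
      rw [Finset.mem_filter] at hm hm'
      exact absurd (hm'.2.2 ▸ hm.2) (lt_irrefl _))]
    rw [lfMap]
    have hc1 : (Finset.univ.filter fun j : Fin (bwt T).length =>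
          (bwt T).get j < (bwt T).get i).card
        = (Finset.univ.filter fun m : Fin S.length => f (S.get m) < f x).card := by
      rw [card_congr_cast hlenbwt
        (fun j : Fin (bwt T).length => (bwt T).get j < (bwt T).get i)]
      congr 1
      apply Finset.filter_congr
      intro m _
      rw [hbg m, hbgi]
    have hc2 : (Finset.univ.filter fun j : Fin (bwt T).length =>
          (j : ℕ) < (i : ℕ) ∧ (bwt T).get j = (bwt T).get i).card
        = (Finset.univ.filter fun m : Fin S.length =>
            (m : ℕ) < (i : ℕ) ∧ f (S.get m) = f x).card := by
      rw [card_congr_cast hlenbwt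
        (fun j : Fin (bwt T).length => (j : ℕ) < (i : ℕ) ∧ (bwt T).get j = (bwt T).get i)]
      congr 1
      apply Finset.filter_congr
      intro m _
      rw [hbg m, hbgi]
      simp [Fin.coe_cast]
    rw [hc1, hc2]
  -- conclude
  have hlf : lfMap (bwt T) i = (j : ℕ) := by
    rw [← hcount2, ← hcount1, ← hj]
    exact hkey j
  rw [hlf, List.getElem?_eq_getElem j.isLt, List.getElem?_eq_getElem hiS]
  simp only [Option.map_some]
  congr 1
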